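/- Let τ₁,…,τ_M be density matrices with prior probabilities p₁,…,p_M, and let ε = min over POVMs {Π₁,…,Π_M} of 1 − Σᵢ pᵢ tr(τᵢ Πᵢ). For any density matrix μ₀, letting 𝒯 = diag(p₁τ₁,…,p_Mτ_M) and 𝒟 = diag(μ₀/M,…,μ₀/M), we have ε ≥ α_{1/M}(𝒯‖𝒟). -/

import Mathlib

open Matrix
open scoped ComplexOrder

/-- Spectral projection of a Hermitian matrix onto the eigenspaces whose
eigenvalue satisfies the predicate `pred`. -/
noncomputable def specProj {ι : Type*} [Fintype ι] [DecidableEq ι]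
    {A : Matrix ι ι ℂ} (hA : A.IsHermitian) (pred : ℝ → Prop) : Matrix ι ι ℂ :=
  letI := Classical.decPred pred
  (hA.eigenvectorUnitary : Matrix ι ι ℂ) *
    Matrix.diagonal (fun i => if pred (hA.eigenvalues i) then (1 : ℂ) else 0) *
    star (hA.eigenvectorUnitary : Matrix ι ι ℂ)

/-- Minimum type-I error `α_β(ρ₀‖ρ₁)` of a binary quantum hypothesis test. -/
noncomputable def alphaE {ι : Type*} [Fintype ι] [DecidableEq ι]
    (ρ₀ ρ₁ : Matrix ι ι ℂ) (β : ℝ) : ℝ :=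
  sInf {x : ℝ | ∃ T : Matrix ι ι ℂ, T.PosSemidef ∧ (1 - T).PosSemidef ∧
    (Matrix.trace (ρ₁ * T)).re ≤ β ∧ x = (Matrix.trace (ρ₀ * (1 - T))).re}

open scoped MatrixOrder in
theorem Matrix.posSemidef_iff_eq_transpose_mul_self {ι : Type*} [Fintype ι] [DecidableEq ι]
    {A : Matrix ι ι ℂ} : A.PosSemidef ↔ ∃ B : Matrix ι ι ℂ, A = Bᴴ * B := by
  constructor
  · intro hA
    exact CStarAlgebra.nonneg_iff_eq_star_mul_self.mp hA.nonneg
  · rintro ⟨B, rfl⟩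
    exact posSemidef_conjTranspose_mul_self B

lemma psd_trace_re_nonneg {ι : Type*} [Fintype ι] [DecidableEq ι]
    {A : Matrix ι ι ℂ} (hA : A.PosSemidef) : 0 ≤ (Matrix.trace A).re := by
  have h : ∀ i, 0 ≤ (A i i).re := by
    intro i
    have := hA.dotProduct_mulVec_nonneg (Pi.single i 1)
    have h2 : star (Pi.single i 1 : ι → ℂ) ⬝ᵥ A.mulVec (Pi.single i 1) = A i i := by
      simp [mulVec, dotProduct, Pi.single_apply]
    rw [h2] at this
    exact (Complex.le_def.mp this).1
  simpa [Matrix.trace, Matrix.diag] using Finset.sum_nonneg fun i _ => h i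

lemma psd_trace_mul_re_nonneg {ι : Type*} [Fintype ι] [DecidableEq ι]
    {A B : Matrix ι ι ℂ} (hA : A.PosSemidef) (hB : B.PosSemidef) :
    0 ≤ (Matrix.trace (A * B)).re := by
  obtain ⟨C, rfl⟩ := posSemidef_iff_eq_transpose_mul_self.mp hA
  rw [← Matrix.trace_mul_cycle]
  exact psd_trace_re_nonneg (hB.mul_mul_conjTranspose_same C)

lemma psd_blockDiagonal {ι κ : Type*} [Fintype ι] [DecidableEq ι] [Fintype κ] [DecidableEq κ]
    {f : κ → Matrix ι ι ℂ} (h : ∀ i, (f i).PosSemidef) :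
    (Matrix.blockDiagonal f).PosSemidef := by
  choose B hB using fun i => posSemidef_iff_eq_transpose_mul_self.mp (h i)
  refine posSemidef_iff_eq_transpose_mul_self.mpr ⟨Matrix.blockDiagonal B, ?_⟩
  rw [Matrix.blockDiagonal_conjTranspose, ← Matrix.blockDiagonal_mul]
  exact congrArg Matrix.blockDiagonal (funext hB)

lemma psd_smul_real {ι : Type*} [Fintype ι] [DecidableEq ι]
    {A : Matrix ι ι ℂ} (hA : A.PosSemidef) {c : ℝ} (hc : 0 ≤ c) :
    ((c : ℂ) • A).PosSemidef := by
  refine PosSemidef.of_dotProduct_mulVec_nonneg ?_ ?_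
  · show ((c : ℂ) • A)ᴴ = (c : ℂ) • A
    rw [conjTranspose_smul, hA.1]
    norm_num
  · intro x
    have := hA.dotProduct_mulVec_nonneg x
    rw [Matrix.smul_mulVec, dotProduct_smul, smul_eq_mul]
    exact mul_nonneg (Complex.zero_le_real.mpr hc) this

/-- lower-bound direction of Theorem 1: for any POVM and any
density matrix `μ₀`, the average error probability of the M-ary test is at
least `α_{1/M}(𝒯‖𝒟(μ₀))`. -/
theorem mary_error_ge_alpha {n M : ℕ}
    {τ : Fin M → Matrix (Fin n) (Fin n) ℂ}
    (hτ : ∀ i, (τ i).PosSemidef) (hτt : ∀ i, (τ i).trace = 1)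
    {p : Fin M → ℝ} (hp : ∀ i, 0 ≤ p i) (hp1 : ∑ i, p i = 1)
    {μ₀ : Matrix (Fin n) (Fin n) ℂ} (hμ : μ₀.PosSemidef) (hμt : μ₀.trace = 1)
    {E : Fin M → Matrix (Fin n) (Fin n) ℂ}
    (hE : ∀ i, (E i).PosSemidef) (hE1 : ∑ i, E i = 1) :
    1 - ∑ i, p i * (Matrix.trace (τ i * E i)).re ≥
      alphaE (Matrix.blockDiagonal (fun i => (p i : ℂ) • τ i))
        (Matrix.blockDiagonal (fun _ : Fin M => ((M : ℂ))⁻¹ • μ₀))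
        (1 / M) := by
  classical
  set ρ₀ := Matrix.blockDiagonal (fun i => (p i : ℂ) • τ i) with hρ₀def
  set T := Matrix.blockDiagonal E with hTdef
  have hρ₀psd : ρ₀.PosSemidef :=
    psd_blockDiagonal fun i => psd_smul_real (hτ i) (hp i)
  have hTpsd : T.PosSemidef := psd_blockDiagonal hE
  have h1mE : ∀ i, ((1 : Matrix (Fin n) (Fin n) ℂ) - E i).PosSemidef := by
    intro i
    have h : (1 : Matrix (Fin n) (Fin n) ℂ) - E i = ∑ j ∈ Finset.univ.erase i, E j := by
      rw [← hE1, eq_comm, Finset.sum_erase_eq_sub (Finset.mem_univ i)]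
    rw [h]
    exact Finset.sum_induction _ _ (fun a b ha hb => ha.add hb)
      Matrix.PosSemidef.zero (fun j _ => hE j)
  have h1T : (1 : Matrix (Fin n × Fin M) (Fin n × Fin M) ℂ) - T
      = Matrix.blockDiagonal (fun i => 1 - E i) := by
    have h := Matrix.blockDiagonal_sub (1 : Fin M → Matrix (Fin n) (Fin n) ℂ) E
    rw [Matrix.blockDiagonal_one] at h
    exact h.symm
  have h1Tpsd : ((1 : Matrix (Fin n × Fin M) (Fin n × Fin M) ℂ) - T).PosSemidef := by
    rw [h1T]; exact psd_blockDiagonal h1mE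
  have hβ : (Matrix.trace
      (Matrix.blockDiagonal (fun _ : Fin M => ((M : ℂ))⁻¹ • μ₀) * T)).re ≤ 1 / M := by
    rw [hTdef, ← Matrix.blockDiagonal_mul, Matrix.trace_blockDiagonal]
    have h2 : ∀ i, (((M : ℂ))⁻¹ • μ₀ * E i).trace = (M : ℂ)⁻¹ * (μ₀ * E i).trace := by
      intro i; rw [Matrix.smul_mul, Matrix.trace_smul, smul_eq_mul]
    simp only [h2]
    rw [← Finset.mul_sum, ← Matrix.trace_sum, ← Finset.mul_sum, hE1, Matrix.mul_one, hμt,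
      mul_one]
    rw [← Complex.ofReal_natCast, ← Complex.ofReal_inv, Complex.ofReal_re, one_div]
  have hval : (Matrix.trace (ρ₀ * (1 - T))).re
      = 1 - ∑ i, p i * (Matrix.trace (τ i * E i)).re := by
    rw [h1T, hρ₀def, ← Matrix.blockDiagonal_mul, Matrix.trace_blockDiagonal]
    have h3 : ∀ i, ((p i : ℂ) • τ i * (1 - E i)).trace
        = (p i : ℂ) * (1 - (τ i * E i).trace) := by
      intro i
      rw [Matrix.smul_mul, Matrix.trace_smul, Matrix.mul_sub, Matrix.mul_one,
        Matrix.trace_sub, hτt i, smul_eq_mul]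
    simp only [h3]
    rw [Complex.re_sum]
    have h4 : ∀ i, ((p i : ℂ) * (1 - (τ i * E i).trace)).re
        = p i - p i * ((τ i * E i).trace).re := by
      intro i
      rw [Complex.re_ofReal_mul, Complex.sub_re, Complex.one_re, mul_sub, mul_one]
    simp only [h4]
    rw [Finset.sum_sub_distrib, hp1]
  have hmem : (1 - ∑ i, p i * (Matrix.trace (τ i * E i)).re) ∈
      {x : ℝ | ∃ S : Matrix (Fin n × Fin M) (Fin n × Fin M) ℂ, S.PosSemidef ∧
        (1 - S).PosSemidef ∧
        (Matrix.trace (Matrix.blockDiagonal (fun _ : Fin M => ((M : ℂ))⁻¹ • μ₀) * S)).re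
          ≤ 1 / M ∧
        x = (Matrix.trace (ρ₀ * (1 - S))).re} :=
    ⟨T, hTpsd, h1Tpsd, hβ, hval.symm⟩
  have hbdd : BddBelow {x : ℝ | ∃ S : Matrix (Fin n × Fin M) (Fin n × Fin M) ℂ,
      S.PosSemidef ∧ (1 - S).PosSemidef ∧
      (Matrix.trace (Matrix.blockDiagonal (fun _ : Fin M => ((M : ℂ))⁻¹ • μ₀) * S)).re
        ≤ 1 / M ∧
      x = (Matrix.trace (ρ₀ * (1 - S))).re} := by
    refine ⟨0, ?_⟩
    rintro x ⟨S, _, hS2, _, rfl⟩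
    exact psd_trace_mul_re_nonneg hρ₀psd hS2
  exact csInf_le hbdd hmem
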